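/- Let $\lambda : A \times A \to (M, *)$ be a hermitian form, and let $(\lambda', \mu')$ be a quadratic form on an abelian group $A'$ with values in a commutative quadratic group $(M'_e, M'_{ee}, h', p')$. Suppose $\alpha : A \to A'$ and $\beta_{ee} : M \to M'_{ee}$ are group homomorphisms such that $\beta_{ee}(m^*) = h'(p'(\beta_{ee}(m))) - \beta_{ee}(m)$ for all $m \in M$ and $\lambda'(\alpha(a_1), \alpha(a_2)) = \beta_{ee}(\lambda(a_1, a_2))$ for all $a_1, a_2 \in A$. Then there exists a unique group homomorphism $\beta_e : M^c_e \to M'_e$ such that $h' \circ \beta_e = \beta_{ee} \circ h^c$ (where $h^c$ is the homomorphism induced by $h_\lambda$ on the quotient), $\beta_e \circ p^c = p' \circ \beta_{ee}$, and $\beta_e \circ \mu^c = \mu' \circ \alpha$. -/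

import Mathlib

namespace CST

/-- The normal closure of a set in an additive group: the smallest normal
subgroup containing the set. -/
def nclosure {G : Type*} [AddGroup G] (s : Set G) : AddSubgroup G :=
  sInf {N : AddSubgroup G | N.Normal ∧ s ⊆ N}

instance nclosure_normal {G : Type*} [AddGroup G] (s : Set G) :
    (nclosure s).Normal := by
  constructor
  intro n hn g
  rw [nclosure, AddSubgroup.mem_sInf] at hn ⊢
  intro N hN
  exact hN.1.conj_mem n (hn N hN) g

variable {A M : Type*} [AddCommGroup A] [AddCommGroup M]

/-- The underlying type of the central extension `M ×_lam A` determined by a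
bilinear map `lam : A × A → M`. -/
def Ext (lam : A →+ A →+ M) : Type _ := M × A

namespace Ext

variable (lam : A →+ A →+ M)

/-- The element of `M ×_lam A` given by the pair `(m, a)`. -/
def mkE (m : M) (a : A) : Ext lam := (m, a)

instance : Add (Ext lam) :=
  ⟨fun x y => (x.1 + y.1 - lam x.2 y.2, x.2 + y.2)⟩

instance : Zero (Ext lam) := ⟨((0 : M), (0 : A))⟩

instance : Neg (Ext lam) :=
  ⟨fun x => (-x.1 - lam x.2 x.2, -x.2)⟩

theorem add_def (x y : Ext lam) :
    x + y = (x.1 + y.1 - lam x.2 y.2, x.2 + y.2) := rfl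

theorem zero_def : (0 : Ext lam) = ((0 : M), (0 : A)) := rfl

theorem neg_def (x : Ext lam) : -x = (-x.1 - lam x.2 x.2, -x.2) := rfl

/-- The operation `(m, a) + (m', a') = (m + m' - lam a a', a + a')` makes
`M ×_lam A` into a group. -/
instance : AddGroup (Ext lam) :=
  AddGroup.ofLeftAxioms
    (by
      intro x y z
      show @Eq (M × A) ((x.1 + y.1 - lam x.2 y.2) + z.1 - lam (x.2 + y.2) z.2, (x.2 + y.2) + z.2)
        (x.1 + (y.1 + z.1 - lam y.2 z.2) - lam x.2 (y.2 + z.2), x.2 + (y.2 + z.2))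
      simp only [map_add, AddMonoidHom.add_apply, map_zero]
      refine Prod.ext ?_ ?_ <;> simp <;> try abel)
    (by
      intro x
      show @Eq (M × A) (0 + x.1 - lam 0 x.2, 0 + x.2) x
      simp only [map_zero, AddMonoidHom.zero_apply]
      refine Prod.ext ?_ ?_ <;> simp)
    (by
      intro x
      show @Eq (M × A) ((-x.1 - lam x.2 x.2) + x.1 - lam (-x.2) x.2, -x.2 + x.2) (0, 0)
      simp only [map_neg, AddMonoidHom.neg_apply]
      refine Prod.ext ?_ ?_ <;> simp <;> try abel)

/-- The function `h_lam (m, a) = m + m^* + lam a a`. -/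
def hfun (star : M →+ M) : Ext lam → M :=
  fun x => x.1 + star x.1 + lam x.2 x.2

/-- The function `p_lam m = (m, 0)`. -/
def pfun : M → Ext lam := fun m => mkE lam m 0

/-- The function `mu_lam a = (0, a)`. -/
def mufun : A → Ext lam := fun a => mkE lam 0 a

/-- The set of relations `(m^*, -a) - (m, a)` in `M ×_lam A`. -/
def relSet (star : M →+ M) : Set (Ext lam) :=
  {x | ∃ (m : M) (a : A), x = mkE lam (star m) (-a) - mkE lam m a}

end Ext

open Ext

/-- Universal property of the commutative quadratic refinement
`(lam, mu^c) : A → (M^c_e, M, h^c, p^c)` among quadratic forms with values in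
commutative quadratic groups. -/
theorem universal_commutative_quadratic_refinement
    {A' Me' Mee' : Type*} [AddCommGroup A'] [AddCommGroup Me'] [AddCommGroup Mee']
    (lam : A →+ A →+ M) (star : M →+ M)
    (star_star : ∀ m : M, star (star m) = m)
    (herm : ∀ a a' : A, lam a' a = star (lam a a'))
    (h' : Me' →+ Mee') (p' : Mee' →+ Me')
    (hph' : ∀ x : Me', h' (p' (h' x)) = 2 • h' x)
    (ph' : ∀ x : Me', p' (h' x) = 2 • x)
    (lam' : A' →+ A' →+ Mee') (mu' : A' → Me')
    (mu'_add : ∀ a a' : A', mu' (a + a') = mu' a + mu' a' + p' (lam' a a'))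
    (h'_mu' : ∀ a : A', h' (mu' a) = lam' a a)
    (alpha : A →+ A') (bee : M →+ Mee')
    (bee_star : ∀ m : M, bee (star m) = h' (p' (bee m)) - bee m)
    (bee_lam : ∀ a1 a2 : A, lam' (alpha a1) (alpha a2) = bee (lam a1 a2)) :
    ∃! be : (Ext lam ⧸ nclosure (relSet lam star)) →+ Me',
      (∀ (m : M) (a : A),
        h' (be (QuotientAddGroup.mk (mkE lam m a))) = bee (m + star m + lam a a)) ∧
      (∀ m : M, be (QuotientAddGroup.mk (mkE lam m 0)) = p' (bee m)) ∧
      (∀ a : A, be (QuotientAddGroup.mk (mkE lam 0 a)) = mu' (alpha a)) := by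
  have mu'_zero : mu' 0 = 0 := by
    have h0 := mu'_add 0 0
    simp only [add_zero, map_zero, AddMonoidHom.zero_apply] at h0
    have : mu' 0 + mu' 0 = mu' 0 + 0 := by rw [add_zero]; exact h0.symm
    exact (add_left_cancel this)
  have plam : ∀ a' : A', p' (lam' a' a') = 2 • mu' a' := by
    intro a'
    rw [← h'_mu', ph']
  have mu'_neg : ∀ a' : A', mu' (-a') = mu' a' := by
    intro a'
    have h0 := mu'_add a' (-a')
    simp only [add_neg_cancel, mu'_zero, map_neg, AddMonoidHom.neg_apply] at h0
    have : mu' (-a') = p' (lam' a' a') - mu' a' := by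
      have := h0
      abel_nf at this ⊢
      linear_combination (norm := abel_nf) -this
    rw [this, plam, two_smul]; abel
  -- the homomorphism on Ext lam
  let φ : Ext lam →+ Me' := AddMonoidHom.mk'
    (fun x => p' (bee x.1) + mu' (alpha x.2))
    (by
      intro x y
      simp only [add_def, map_add, map_sub, mu'_add, bee_lam]
      abel)
  have φmk : ∀ (m : M) (a : A), φ (mkE lam m a) = p' (bee m) + mu' (alpha a) :=
    fun m a => rfl
  have pbee_star : ∀ m : M, p' (bee (star m)) = p' (bee m) := by
    intro m
    rw [bee_star, map_sub, ph', two_smul]; abel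
  have hker : nclosure (relSet lam star) ≤ φ.ker := by
    apply sInf_le
    refine ⟨φ.normal_ker, ?_⟩
    rintro x ⟨m, a, rfl⟩
    have : φ (mkE lam (star m) (-a) - mkE lam m a)
        = φ (mkE lam (star m) (-a)) - φ (mkE lam m a) := map_sub φ _ _
    rw [SetLike.mem_coe, AddMonoidHom.mem_ker, this, φmk, φmk, map_neg, mu'_neg,
      pbee_star]
    abel
  refine ⟨QuotientAddGroup.lift _ φ hker, ⟨?_, ?_, ?_⟩, ?_⟩
  · intro m a
    show h' (φ (mkE lam m a)) = _
    rw [φmk, map_add, map_add, map_add, h'_mu', bee_lam, bee_star]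
    abel
  · intro m
    show φ (mkE lam m 0) = _
    rw [φmk, map_zero, mu'_zero, add_zero]
  · intro a
    show φ (mkE lam 0 a) = _
    rw [φmk, map_zero, map_zero, zero_add]
  · rintro be ⟨-, hbe2, hbe3⟩
    ext x
    obtain ⟨m, a⟩ := x
    have hsplit : (mkE lam m a : Ext lam) = mkE lam m 0 + mkE lam 0 a := by
      simp only [add_def, mkE, map_zero, AddMonoidHom.zero_apply]
      exact Prod.ext (by show m = m + 0 - lam 0 a; simp) (by show a = 0 + a; simp)
    have : (QuotientAddGroup.mk (mkE lam m a) :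
        Ext lam ⧸ nclosure (relSet lam star))
        = QuotientAddGroup.mk (mkE lam m 0) + QuotientAddGroup.mk (mkE lam 0 a) := by
      rw [← QuotientAddGroup.mk_add, ← hsplit]
    show be (QuotientAddGroup.mk (mkE lam m a))
        = QuotientAddGroup.lift _ φ hker (QuotientAddGroup.mk (mkE lam m a))
    rw [this, map_add, map_add, hbe2, hbe3]
    show _ = φ (mkE lam m 0) + φ (mkE lam 0 a)
    rw [φmk, φmk, map_zero, map_zero, map_zero, mu'_zero, add_zero, zero_add]

end CST
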